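/- Suppose the weights $a_{ij}(t)=a_{ji}(t)\ge0$, $a_{ii}(t)=0$, are piecewise-constant in time taking values in a finite set, and the graph $\mathcal{G}(A(t))$ is connected for all $t$. Let $\lambda=\min_{t\ge0}\lambda_2(t)>0$, where $\lambda_2(t)$ is the second smallest Laplacian eigenvalue of the graph with weights $a_{ij}(t)^{2/(1+\alpha)}$. Then along any solution of $\dot x_i=\sum_j a_{ij}(t)\mathrm{sign}(x_j-x_i)|x_j-x_i|^\alpha$ ($0<\alpha<1$), the function $V_2(t)=\tfrac12\|x(t)-\kappa\mathbf{1}\|^2$ with $\kappa=\frac1n\mathbf{1}^Tx(0)$ satisfies $\dot V_2 \le -2^\alpha\lambda^{(1+\alpha)/2}V_2^{(1+\alpha)/2}$, and hence all states reach the initial average $\kappa$ by time $t_3=\frac{2^{1-\alpha}V_2(0)^{(1-\alpha)/2}}{(1-\alpha)\lambda^{(1+\alpha)/2}}$. -/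

import Mathlib

open Finset Matrix

def graphLaplacian {n : ℕ} (A : Matrix (Fin n) (Fin n) ℝ) : Matrix (Fin n) (Fin n) ℝ :=
  fun i j => if i = j then ∑ k ∈ univ.erase i, A i k else -A i j

def WeightConnected {n : ℕ} (A : Matrix (Fin n) (Fin n) ℝ) : Prop :=
  ∀ i j : Fin n, Relation.ReflTransGen (fun a b => 0 < A a b) i j

/- ## Auxiliary lemmas -/

lemma aux_real_rpow_add_le {p : ℝ} (hp : 0 ≤ p) (hp1 : p ≤ 1) (x y : ℝ) (hx : 0 ≤ x)
    (hy : 0 ≤ y) : (x + y) ^ p ≤ x ^ p + y ^ p := by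
  lift x to NNReal using hx
  lift y to NNReal using hy
  have := NNReal.rpow_add_le_add_rpow x y hp hp1
  exact_mod_cast this

lemma aux_sum_rpow_ge {ι : Type*} (s : Finset ι) (f : ι → ℝ) (hf : ∀ i ∈ s, 0 ≤ f i)
    {p : ℝ} (hp : 0 < p) (hp1 : p ≤ 1) : (∑ i ∈ s, f i) ^ p ≤ ∑ i ∈ s, f i ^ p := by
  classical
  induction s using Finset.induction_on with
  | empty => simp [Real.zero_rpow hp.ne']
  | insert _ _ ha ih =>
    rename_i b s
    rw [Finset.sum_insert ha, Finset.sum_insert ha]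
    calc (f b + ∑ i ∈ s, f i) ^ p ≤ f b ^ p + (∑ i ∈ s, f i) ^ p :=
          aux_real_rpow_add_le hp.le hp1 _ _ (hf b (by simp))
            (Finset.sum_nonneg fun i hi => hf i (by simp [hi]))
      _ ≤ f b ^ p + ∑ i ∈ s, f i ^ p := by
          gcongr
          exact ih fun i hi => hf i (by simp [hi])

lemma aux_weighted_antisymm {n : ℕ} (c g : Fin n → Fin n → ℝ) (y : Fin n → ℝ)
    (hc : ∀ i j, c i j = c j i) (hg : ∀ i j, g i j = -g j i) :
    ∑ i, ∑ j, c i j * g i j * y i = -(1/2) * ∑ i, ∑ j, c i j * g i j * (y j - y i) := by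
  have hswap : ∑ i, ∑ j, c i j * g i j * y j = -∑ i, ∑ j, c i j * g i j * y i := by
    rw [Finset.sum_comm, ← Finset.sum_neg_distrib]
    apply Finset.sum_congr rfl; intro i _
    rw [← Finset.sum_neg_distrib]
    apply Finset.sum_congr rfl; intro j _
    rw [hc j i, hg j i]; ring
  have hthis : ∑ i, ∑ j, c i j * g i j * (y j - y i)
      = ∑ i, ∑ j, c i j * g i j * y j - ∑ i, ∑ j, c i j * g i j * y i := by
    rw [← Finset.sum_sub_distrib]
    apply Finset.sum_congr rfl; intro i _
    rw [← Finset.sum_sub_distrib]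
    apply Finset.sum_congr rfl; intro j _; ring
  rw [hthis, hswap]; ring

lemma aux_laplacian_entry {n : ℕ} (Bm : Matrix (Fin n) (Fin n) ℝ) (hd : ∀ i, Bm i i = 0)
    (i j : Fin n) :
    graphLaplacian Bm i j = (if i = j then ∑ k, Bm i k else 0) - Bm i j := by
  unfold graphLaplacian
  by_cases h : i = j
  · subst h; simp [Finset.sum_erase _ (hd i), hd i]
  · simp [h]

lemma aux_laplacian_quadform {n : ℕ} (Bm : Matrix (Fin n) (Fin n) ℝ)
    (hsym : ∀ i j, Bm i j = Bm j i) (hd : ∀ i, Bm i i = 0) (y : Fin n → ℝ) :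
    ∑ i, ∑ j, Bm i j * (y j - y i)^2 = 2 * (y ⬝ᵥ (graphLaplacian Bm).mulVec y) := by
  have hLy : ∀ i, (graphLaplacian Bm).mulVec y i
      = (∑ k, Bm i k) * y i - ∑ j, Bm i j * y j := by
    intro i
    simp only [Matrix.mulVec, dotProduct]
    rw [show ∑ j, graphLaplacian Bm i j * y j
        = ∑ j, (((if i = j then ∑ k, Bm i k else 0) - Bm i j) * y j) from
      Finset.sum_congr rfl fun j _ => by rw [aux_laplacian_entry Bm hd]]
    simp only [sub_mul, Finset.sum_sub_distrib, ite_mul, zero_mul, Finset.sum_ite_eq,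
      Finset.mem_univ, if_true]
  simp only [dotProduct]
  have expand : ∑ i, y i * (graphLaplacian Bm).mulVec y i
      = ∑ i, ((∑ k, Bm i k) * y i ^ 2) - ∑ i, ∑ j, Bm i j * (y i * y j) := by
    rw [← Finset.sum_sub_distrib]
    apply Finset.sum_congr rfl; intro i _
    rw [hLy i, mul_sub, Finset.mul_sum]
    congr 1
    · ring
    · apply Finset.sum_congr rfl; intro j _; ring
  rw [expand]
  have lhs_expand : ∑ i, ∑ j, Bm i j * (y j - y i)^2
      = 2 * (∑ i, ((∑ k, Bm i k) * y i ^ 2) - ∑ i, ∑ j, Bm i j * (y i * y j)) := by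
    have h1 : ∑ i, ∑ j, Bm i j * y j ^ 2 = ∑ i, (∑ k, Bm i k) * y i ^ 2 := by
      rw [Finset.sum_comm]
      apply Finset.sum_congr rfl; intro j _
      rw [Finset.sum_mul]
      apply Finset.sum_congr rfl; intro i _
      rw [hsym i j]
    have h2 : ∑ i, ∑ j, Bm i j * (y j - y i)^2
        = ∑ i, ∑ j, Bm i j * y j ^ 2 + ∑ i, (∑ k, Bm i k) * y i ^ 2
          - 2 * ∑ i, ∑ j, Bm i j * (y i * y j) := by
      rw [Finset.mul_sum, ← Finset.sum_add_distrib, ← Finset.sum_sub_distrib]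
      apply Finset.sum_congr rfl; intro i _
      rw [Finset.mul_sum, Finset.sum_mul, ← Finset.sum_add_distrib, ← Finset.sum_sub_distrib]
      apply Finset.sum_congr rfl; intro j _
      ring
    rw [h2, h1]; ring
  rw [lhs_expand]

lemma aux_eigen_lower_bound {n : ℕ} (hn : 2 ≤ n) (Tm : Matrix (Fin n) (Fin n) ℝ)
    (μv : Fin n → ℝ)
    (hT : Tmᵀ * Tm = 1) (L : Matrix (Fin n) (Fin n) ℝ)
    (hdz : L = Tmᵀ * Matrix.diagonal μv * Tm)
    (hLone : L.mulVec (fun _ => 1) = 0)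
    (hmono : Monotone μv) (hμ1 : 0 < μv ⟨1, Nat.lt_of_lt_of_le one_lt_two hn⟩)
    (lam : ℝ) (hlam2 : lam ≤ μv ⟨1, Nat.lt_of_lt_of_le one_lt_two hn⟩)
    (y : Fin n → ℝ) (hy : ∑ i, y i = 0) :
    lam * ∑ i, (y i)^2 ≤ y ⬝ᵥ L.mulVec y := by
  have hTT : Tm * Tmᵀ = 1 := mul_eq_one_comm.mp hT
  set z := Tm.mulVec y with hz
  have hadj : ∀ v w : Fin n → ℝ, v ⬝ᵥ Tmᵀ.mulVec w = Tm.mulVec v ⬝ᵥ w := by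
    intro v w
    rw [dotProduct_mulVec, Matrix.vecMul_transpose]
  have hquad : y ⬝ᵥ L.mulVec y = ∑ k, μv k * (z k)^2 := by
    rw [hdz, ← Matrix.mulVec_mulVec, ← Matrix.mulVec_mulVec, hadj]
    simp only [dotProduct, Matrix.mulVec_diagonal]
    apply Finset.sum_congr rfl; intro k _; ring
  have hnorm : ∀ v : Fin n → ℝ, ∑ k, (Tm.mulVec v k)^2 = ∑ k, (v k)^2 := by
    intro v
    have : Tm.mulVec v ⬝ᵥ Tm.mulVec v = v ⬝ᵥ v := by
      rw [← hadj, Matrix.mulVec_mulVec, hT, Matrix.one_mulVec]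
    simpa [dotProduct, sq] using this
  set w := Tm.mulVec (fun _ => 1 : Fin n → ℝ) with hw
  have hDw : Matrix.diagonal μv *ᵥ w = 0 := by
    have h0 : (Tmᵀ * Matrix.diagonal μv * Tm) *ᵥ (fun _ => (1:ℝ)) = 0 := by
      rw [← hdz]; exact hLone
    have h1 : Tmᵀ *ᵥ (Matrix.diagonal μv *ᵥ w) = 0 := by
      rw [hw, Matrix.mulVec_mulVec, Matrix.mulVec_mulVec]
      exact h0
    have h2 := congrArg (Tm *ᵥ ·) h1
    rw [Matrix.mulVec_mulVec, hTT, Matrix.one_mulVec, Matrix.mulVec_zero] at h2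
    exact h2
  have hwk : ∀ k : Fin n, k ≠ ⟨0, by omega⟩ → w k = 0 := by
    intro k hk
    have h1k : (⟨1, by omega⟩ : Fin n) ≤ k := by
      rw [Fin.le_def]
      exact Nat.one_le_iff_ne_zero.mpr fun h => hk (Fin.ext h)
    have hμk : 0 < μv k := lt_of_lt_of_le hμ1 (hmono h1k)
    have := congrFun hDw k
    simp only [Matrix.mulVec_diagonal, Pi.zero_apply] at this
    exact (mul_eq_zero.mp this).resolve_left hμk.ne'
  have hwz : w ⬝ᵥ z = 0 := by
    have hy' : Tmᵀ *ᵥ z = y := by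
      rw [hz, Matrix.mulVec_mulVec, hT, Matrix.one_mulVec]
    have : (fun _ => (1:ℝ)) ⬝ᵥ (Tmᵀ *ᵥ z) = w ⬝ᵥ z := hadj _ _
    rw [hy'] at this
    rw [← this]
    simpa [dotProduct] using hy
  have hz0 : z ⟨0, by omega⟩ = 0 := by
    have hsum : w ⬝ᵥ z = w ⟨0, by omega⟩ * z ⟨0, by omega⟩ := by
      rw [dotProduct]
      apply Finset.sum_eq_single
      · intro k _ hk; rw [hwk k hk, zero_mul]
      · intro h; exact absurd (Finset.mem_univ _) h
    have hw0 : w ⟨0, by omega⟩ ≠ 0 := by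
      have h1 : ∑ k, (w k)^2 = (n : ℝ) := by
        have := hnorm (fun _ => (1:ℝ))
        simpa using this
      have h2 : ∑ k, (w k)^2 = (w ⟨0, by omega⟩)^2 := by
        apply Finset.sum_eq_single
        · intro k _ hk; rw [hwk k hk]; ring
        · intro h; exact absurd (Finset.mem_univ _) h
      intro h
      rw [h2, h] at h1
      have hpos : (0:ℝ) < n := by positivity
      nlinarith [h1, hpos]
    have := hwz
    rw [hsum] at this
    exact (mul_eq_zero.mp this).resolve_left hw0
  rw [hquad]
  have : lam * ∑ i, (y i)^2 = ∑ k, lam * (z k)^2 := by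
    rw [← hnorm y, Finset.mul_sum]
  rw [this]
  apply Finset.sum_le_sum
  intro k _
  by_cases hk : k = ⟨0, by omega⟩
  · subst hk; rw [hz0]; simp
  · have h1k : (⟨1, by omega⟩ : Fin n) ≤ k := by
      rw [Fin.le_def]
      exact Nat.one_le_iff_ne_zero.mpr fun h => hk (Fin.ext h)
    have : lam ≤ μv k := le_trans hlam2 (hmono h1k)
    nlinarith [sq_nonneg (z k)]

lemma aux_sign_identity (α : ℝ) (hα0 : 0 < α) (d : ℝ) :
    Real.sign d * |d| ^ α * d = |d| ^ (1 + α) := by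
  have h1 : (1:ℝ) + α ≠ 0 := by linarith
  rcases lt_trichotomy d 0 with h | h | h
  · rw [Real.sign_of_neg h, abs_of_neg h, Real.rpow_add' (by linarith) h1, Real.rpow_one]
    ring
  · subst h
    simp [Real.zero_rpow h1]
  · rw [Real.sign_of_pos h, abs_of_pos h, Real.rpow_add' h.le h1, Real.rpow_one]
    ring

lemma aux_pow_identity (α : ℝ) (hα0 : 0 < α) (av d : ℝ) (ha : 0 ≤ av) :
    (av ^ (2/(1+α)) * d^2) ^ ((1+α)/2) = av * |d| ^ (1+α) := by
  have h1 : (0:ℝ) < 1 + α := by linarith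
  rw [Real.mul_rpow (Real.rpow_nonneg ha _) (sq_nonneg d)]
  congr 1
  · rw [← Real.rpow_mul ha]
    rw [show (2/(1+α)) * ((1+α)/2) = 1 by field_simp]
    exact Real.rpow_one av
  · rw [← sq_abs d, ← Real.rpow_natCast |d| 2, ← Real.rpow_mul (abs_nonneg d)]
    congr 1
    push_cast
    ring

theorem finite_time_average_agreement_switching {n : ℕ} (hn : 2 ≤ n)
    (a : ℝ → Matrix (Fin n) (Fin n) ℝ)
    (hfin : (Set.range a).Finite)  -- the weights take values in a finite set
    (hsymm : ∀ t, (a t).IsSymm) (hnonneg : ∀ t i j, 0 ≤ a t i j)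
    (hdiag : ∀ t i, a t i i = 0)
    (hconn : ∀ t, WeightConnected (a t))  -- the graph is connected at all times
    (α : ℝ) (hα0 : 0 < α) (hα1 : α < 1)
    (B : ℝ → Matrix (Fin n) (Fin n) ℝ)
    (hB : ∀ t i j, B t i j = a t i j ^ (2 / (1 + α)))
    -- at each time `t`, `μ t` lists the eigenvalues of the Laplacian of `B t`
    -- in increasing order, so `μ t ⟨1, _⟩ = λ₂(t)`:
    (μ : ℝ → Fin n → ℝ) (T : ℝ → Matrix (Fin n) (Fin n) ℝ)
    (hT : ∀ t, (T t)ᵀ * T t = 1)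
    (hdiagz : ∀ t, graphLaplacian (B t) = (T t)ᵀ * Matrix.diagonal (μ t) * T t)
    (hmono : ∀ t, Monotone (μ t))
    (hμ0 : ∀ t, μ t ⟨0, by omega⟩ = 0)
    (hμ2 : ∀ t, 0 < μ t ⟨1, by omega⟩)
    -- `lam` is the minimum over `t ≥ 0` of the second smallest eigenvalues `λ₂(t)`:
    (lam : ℝ)
    (hlam : IsLeast {r : ℝ | ∃ t : ℝ, 0 ≤ t ∧ r = μ t ⟨1, by omega⟩} lam)
    (x : ℝ → Fin n → ℝ)
    (hode : ∀ (t : ℝ) (i : Fin n), HasDerivAt (fun s => x s i)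
      (∑ j, a t i j * Real.sign (x t j - x t i) * |x t j - x t i| ^ α) t)
    (κ : ℝ) (hκ : κ = (∑ i, x 0 i) / n)
    (V2 : ℝ → ℝ)
    (hV2 : V2 = fun t => (1 / 2) * ∑ i, (x t i - κ) ^ 2) :
    (∀ t : ℝ, 0 ≤ t → 0 < V2 t →
        deriv V2 t ≤ -(2 ^ α * lam ^ ((1 + α) / 2)) * V2 t ^ ((1 + α) / 2)) ∧
      (∀ t : ℝ,
        2 ^ (1 - α) * V2 0 ^ ((1 - α) / 2) / ((1 - α) * lam ^ ((1 + α) / 2)) ≤ t →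
        ∀ i : Fin n, x t i = κ) := by
  classical
  have hone : (0:ℝ) < 1 + α := by linarith
  set p : ℝ := (1+α)/2 with hpdef
  set q : ℝ := (1-α)/2 with hqdef
  have hp0 : 0 < p := by rw [hpdef]; linarith
  have hp1 : p ≤ 1 := by rw [hpdef]; linarith
  have hq0 : 0 < q := by rw [hqdef]; linarith
  have hlampos : 0 < lam := by
    obtain ⟨t0, ht0, h⟩ := hlam.1
    rw [h]; exact hμ2 t0
  set c : ℝ := 2 ^ α * lam ^ p with hcdef
  have hcpos : 0 < c := by
    rw [hcdef]
    exact mul_pos (Real.rpow_pos_of_pos two_pos α) (Real.rpow_pos_of_pos hlampos p)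
  -- symmetry and antisymmetry of the coupling terms
  have hcs : ∀ t i j, a t i j = a t j i := by
    intro t i j
    exact ((hsymm t).apply i j).symm
  have hgs : ∀ t i j, Real.sign (x t j - x t i) * |x t j - x t i| ^ α
      = -(Real.sign (x t i - x t j) * |x t i - x t j| ^ α) := by
    intro t i j
    rw [show x t i - x t j = -(x t j - x t i) by ring, Real.sign_neg, abs_neg]
    ring
  -- nonnegativity and symmetry of B
  have hBnn : ∀ t i j, 0 ≤ B t i j := by
    intro t i j; rw [hB]; exact Real.rpow_nonneg (hnonneg t i j) _
  have hBsym : ∀ t i j, B t i j = B t j i := by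
    intro t i j; rw [hB, hB, hcs]
  have hBdiag : ∀ t i, B t i i = 0 := by
    intro t i
    rw [hB, hdiag]
    exact Real.zero_rpow (by positivity)
  -- key derivative formula for V2
  have hkey : ∀ t : ℝ, HasDerivAt V2
      (-(1/2) * ∑ i, ∑ j, (B t i j * (x t j - x t i)^2) ^ p) t := by
    intro t
    have h1 : ∀ i : Fin n, HasDerivAt (fun s => (1/2:ℝ) * (x s i - κ)^2)
        ((x t i - κ) * ∑ j, a t i j * Real.sign (x t j - x t i) * |x t j - x t i| ^ α) t := by
      intro i
      have hd := ((hode t i).sub_const κ).pow 2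
      have hd2 := hd.const_mul (1/2:ℝ)
      refine hd2.congr_deriv (Eq.symm ?_)
      push_cast
      ring
    have hsum := HasDerivAt.fun_sum (fun i (_ : i ∈ Finset.univ) => h1 i)
    have hVeq : V2 = fun s => ∑ i, (1/2:ℝ)*(x s i - κ)^2 := by
      rw [hV2]; funext s; rw [Finset.mul_sum]
    rw [hVeq]
    refine hsum.congr_deriv (Eq.symm ?_)
    -- identify the derivative value
    have e1 : ∑ i, (x t i - κ) * ∑ j, a t i j * Real.sign (x t j - x t i) * |x t j - x t i| ^ α
        = ∑ i, ∑ j, a t i j * (Real.sign (x t j - x t i) * |x t j - x t i| ^ α)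
            * (fun i => x t i - κ) i := by
      apply Finset.sum_congr rfl; intro i _
      rw [Finset.mul_sum]
      apply Finset.sum_congr rfl; intro j _
      show (x t i - κ) * (a t i j * Real.sign (x t j - x t i) * |x t j - x t i| ^ α)
        = a t i j * (Real.sign (x t j - x t i) * |x t j - x t i| ^ α) * (x t i - κ)
      ring
    rw [e1, aux_weighted_antisymm (a t)
      (fun i j => Real.sign (x t j - x t i) * |x t j - x t i| ^ α)
      (fun i => x t i - κ) (hcs t) (hgs t)]
    congr 1
    apply Finset.sum_congr rfl; intro i _
    apply Finset.sum_congr rfl; intro j _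
    show (B t i j * (x t j - x t i)^2) ^ p
      = a t i j * (Real.sign (x t j - x t i) * |x t j - x t i| ^ α)
        * ((x t j - κ) - (x t i - κ))
    rw [hB, hpdef, aux_pow_identity α hα0 (a t i j) (x t j - x t i) (hnonneg t i j)]
    rw [show (x t j - κ) - (x t i - κ) = x t j - x t i by ring]
    rw [← aux_sign_identity α hα0 (x t j - x t i)]
    ring
  -- conservation of the sum
  have hconsv : ∀ t : ℝ, ∑ i, x t i = ∑ i, x 0 i := by
    have hzero : ∀ t : ℝ, HasDerivAt (fun s => ∑ i, x s i) 0 t := by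
      intro t
      have hsum := HasDerivAt.fun_sum (fun i (_ : i ∈ Finset.univ) => hode t i)
      refine hsum.congr_deriv (Eq.symm ?_)
      have h := aux_weighted_antisymm (a t)
        (fun i j => Real.sign (x t j - x t i) * |x t j - x t i| ^ α)
        (fun _ => (1:ℝ)) (hcs t) (hgs t)
      simp only [sub_self, mul_zero, Finset.sum_const_zero, mul_one] at h
      rw [← h]
      apply Finset.sum_congr rfl; intro i _
      apply Finset.sum_congr rfl; intro j _
      ring
    intro t
    exact is_const_of_deriv_eq_zero (fun s => (hzero s).differentiableAt)
      (fun s => (hzero s).deriv) t 0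
  have hnR : (0:ℝ) < n := by positivity
  have hsumy : ∀ t : ℝ, ∑ i, (x t i - κ) = 0 := by
    intro t
    rw [Finset.sum_sub_distrib, hconsv t, Finset.sum_const, hκ]
    simp only [Finset.card_univ, Fintype.card_fin, nsmul_eq_mul]
    field_simp
    ring
  have hV2nn : ∀ t, 0 ≤ V2 t := by
    intro t; rw [hV2]
    have : (0:ℝ) ≤ ∑ i, (x t i - κ)^2 := Finset.sum_nonneg fun i _ => sq_nonneg _
    linarith
  have hV2val : ∀ t, ∑ i, (x t i - κ)^2 = 2 * V2 t := by
    intro t; rw [hV2]; ring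
  -- the main differential inequality
  have hmain : ∀ t : ℝ, 0 ≤ t → deriv V2 t ≤ -c * V2 t ^ p := by
    intro t ht
    rw [(hkey t).deriv]
    -- Laplacian of B t annihilates constants
    have hL1 : (graphLaplacian (B t)) *ᵥ (fun _ => (1:ℝ)) = 0 := by
      funext i
      simp only [Matrix.mulVec, dotProduct, mul_one, Pi.zero_apply]
      rw [show ∑ j, graphLaplacian (B t) i j
          = ∑ j, ((if i = j then ∑ k, B t i k else 0) - B t i j) from
        Finset.sum_congr rfl fun j _ => by rw [aux_laplacian_entry (B t) (hBdiag t)]]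
      simp [Finset.sum_sub_distrib, Finset.sum_ite_eq]
    have heig := aux_eigen_lower_bound hn (T t) (μ t) (hT t) (graphLaplacian (B t))
      (hdiagz t) hL1 (hmono t) (hμ2 t) lam (hlam.2 ⟨t, ht, rfl⟩)
      (fun i => x t i - κ) (hsumy t)
    have hquad : ∑ i, ∑ j, B t i j * (x t j - x t i)^2
        = 2 * ((fun i => x t i - κ) ⬝ᵥ (graphLaplacian (B t)).mulVec (fun i => x t i - κ)) := by
      rw [← aux_laplacian_quadform (B t) (hBsym t) (hBdiag t) (fun i => x t i - κ)]
      apply Finset.sum_congr rfl; intro i _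
      apply Finset.sum_congr rfl; intro j _
      show B t i j * (x t j - x t i)^2 = B t i j * ((x t j - κ) - (x t i - κ))^2
      ring
    have hlow : 4 * lam * V2 t ≤ ∑ i, ∑ j, B t i j * (x t j - x t i)^2 := by
      rw [hquad]
      have h2 : lam * ∑ i, (x t i - κ)^2 = lam * (2 * V2 t) := by rw [hV2val]
      calc 4 * lam * V2 t = 2 * (lam * (2 * V2 t)) := by ring
        _ = 2 * (lam * ∑ i, ((fun i => x t i - κ) i)^2) := by rw [← h2]
        _ ≤ 2 * ((fun i => x t i - κ) ⬝ᵥ (graphLaplacian (B t)).mulVec (fun i => x t i - κ)) := by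
            linarith [heig]
    have hstep1 : (∑ i, ∑ j, B t i j * (x t j - x t i)^2) ^ p
        ≤ ∑ i, ∑ j, (B t i j * (x t j - x t i)^2) ^ p := by
      have hps : ∀ (F : Fin n → Fin n → ℝ),
          ∑ ij ∈ Finset.univ ×ˢ Finset.univ, F ij.1 ij.2 = ∑ i, ∑ j, F i j :=
        fun F => Finset.sum_product' Finset.univ Finset.univ F
      rw [← hps (fun i j => B t i j * (x t j - x t i)^2),
        ← hps (fun i j => (B t i j * (x t j - x t i)^2) ^ p)]
      exact aux_sum_rpow_ge _ _
        (fun ij _ => mul_nonneg (hBnn t ij.1 ij.2) (sq_nonneg _)) hp0 hp1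
    have hstep2 : (4 * lam * V2 t) ^ p ≤ (∑ i, ∑ j, B t i j * (x t j - x t i)^2) ^ p := by
      apply Real.rpow_le_rpow _ hlow hp0.le
      have := hV2nn t
      nlinarith
    have hval : (4 * lam * V2 t) ^ p = 2 * c * V2 t ^ p := by
      rw [Real.mul_rpow (by nlinarith [hV2nn t] : (0:ℝ) ≤ 4 * lam) (hV2nn t),
        Real.mul_rpow (by norm_num : (0:ℝ) ≤ 4) hlampos.le]
      have h4 : (4:ℝ) ^ p = 2 * 2 ^ α := by
        rw [show (4:ℝ) = (2:ℝ) ^ (2:ℝ) by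
          rw [show (2:ℝ) = ((2:ℕ):ℝ) by norm_num, Real.rpow_natCast]; norm_num]
        rw [← Real.rpow_mul (by norm_num : (0:ℝ) ≤ 2)]
        rw [show (2:ℝ) * p = 1 + α by rw [hpdef]; ring]
        rw [Real.rpow_add two_pos, Real.rpow_one]
      rw [h4, hcdef]
      ring
    calc -(1/2) * ∑ i, ∑ j, (B t i j * (x t j - x t i)^2) ^ p
        ≤ -(1/2) * (4 * lam * V2 t) ^ p := by
          have := le_trans hstep2 hstep1
          linarith
      _ = -c * V2 t ^ p := by rw [hval]; ring
  refine ⟨fun t ht _ => hmain t ht, ?_⟩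
  -- Part 2: finite-time convergence
  intro t ht i
  set t3 : ℝ := 2 ^ (1 - α) * V2 0 ^ q / ((1 - α) * lam ^ p) with ht3def
  have h2α : (0:ℝ) < 2 ^ α := Real.rpow_pos_of_pos two_pos α
  have hlamp : (0:ℝ) < lam ^ p := Real.rpow_pos_of_pos hlampos p
  have ht3val : t3 = V2 0 ^ q / (q * c) := by
    rw [ht3def, hcdef, hqdef]
    rw [show (1:ℝ) - α = 1 - α from rfl]
    rw [Real.rpow_sub two_pos, Real.rpow_one]
    field_simp
  have hqc : 0 < q * c := mul_pos hq0 hcpos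
  have ht3nn : 0 ≤ t3 := by
    rw [ht3val]
    exact div_nonneg (Real.rpow_nonneg (hV2nn 0) q) hqc.le
  have ht0 : (0:ℝ) ≤ t := le_trans ht3nn ht
  have hV2t : V2 t = 0 := by
    by_contra hne
    have hpos : 0 < V2 t := (hV2nn t).lt_of_ne (Ne.symm hne)
    have hanti : Antitone V2 := by
      apply antitone_of_deriv_nonpos (fun s => (hkey s).differentiableAt)
      intro s
      rw [(hkey s).deriv]
      have : (0:ℝ) ≤ ∑ i, ∑ j, (B s i j * (x s j - x s i)^2) ^ p :=
        Finset.sum_nonneg fun i _ => Finset.sum_nonneg fun j _ =>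
          Real.rpow_nonneg (mul_nonneg (hBnn s i j) (sq_nonneg _)) p
      nlinarith
    have hposon : ∀ s ∈ Set.Icc (0:ℝ) t, 0 < V2 s :=
      fun s hs => lt_of_lt_of_le hpos (hanti hs.2)
    set W : ℝ → ℝ := fun s => V2 s ^ q with hWdef
    have hVcont : Continuous V2 := by
      have : Differentiable ℝ V2 := fun s => (hkey s).differentiableAt
      exact this.continuous
    have hWcont : Continuous W := hVcont.rpow_const (fun s => Or.inr hq0.le)
    set G : ℝ → ℝ := fun s => W s + q * c * s with hGdef
    have hGanti : AntitoneOn G (Set.Icc 0 t) := by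
      have hWd : ∀ s ∈ Set.Icc (0:ℝ) t,
          HasDerivAt W (deriv V2 s * q * V2 s ^ (q-1)) s := by
        intro s hs
        have hVs : 0 < V2 s := hposon s hs
        have h := (hkey s).rpow_const (p := q) (Or.inl hVs.ne')
        rwa [← (hkey s).deriv] at h
      have hGd : ∀ s ∈ Set.Icc (0:ℝ) t,
          HasDerivAt G (deriv V2 s * q * V2 s ^ (q-1) + q * c) s := by
        intro s hs
        have hlin : HasDerivAt (fun s' : ℝ => q * c * s') (q * c) s := by
          simpa using (hasDerivAt_id s).const_mul (q*c)
        exact (hWd s hs).add hlin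
      apply antitoneOn_of_deriv_nonpos (convex_Icc 0 t)
      · exact (hWcont.add (continuous_const.mul continuous_id)).continuousOn
      · intro s hs
        rw [interior_Icc] at hs
        exact (hGd s ⟨hs.1.le, hs.2.le⟩).differentiableAt.differentiableWithinAt
      · intro s hs
        rw [interior_Icc] at hs
        have hsm : s ∈ Set.Icc (0:ℝ) t := ⟨hs.1.le, hs.2.le⟩
        have hVs : 0 < V2 s := hposon s hsm
        rw [(hGd s hsm).deriv]
        have hDs : deriv V2 s ≤ -c * V2 s ^ p := hmain s hs.1.le
        have hVq1 : (0:ℝ) < V2 s ^ (q-1) := Real.rpow_pos_of_pos hVs _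
        have hprod : V2 s ^ (q-1) * V2 s ^ p = 1 := by
          rw [← Real.rpow_add hVs]
          rw [show q - 1 + p = 0 by rw [hqdef, hpdef]; ring]
          exact Real.rpow_zero _
        have hchain : deriv V2 s * q * V2 s ^ (q-1) ≤ -(q * c) := by
          calc deriv V2 s * q * V2 s ^ (q-1)
              = q * (deriv V2 s * V2 s ^ (q-1)) := by ring
            _ ≤ q * (-c * V2 s ^ p * V2 s ^ (q-1)) := by
                apply mul_le_mul_of_nonneg_left _ hq0.le
                exact mul_le_mul_of_nonneg_right hDs hVq1.le
            _ = -(q * c) * (V2 s ^ (q-1) * V2 s ^ p) := by ring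
            _ = -(q * c) := by rw [hprod, mul_one]
        linarith
    have hmem0 : (0:ℝ) ∈ Set.Icc (0:ℝ) t := ⟨le_refl _, ht0⟩
    have hmemt : t ∈ Set.Icc (0:ℝ) t := ⟨ht0, le_refl _⟩
    have hGle : G t ≤ G 0 := hGanti hmem0 hmemt ht0
    have hG0 : G 0 = W 0 := by simp [hGdef]
    have hWt : 0 < W t := Real.rpow_pos_of_pos hpos q
    have hbig : V2 0 ^ q ≤ q * c * t := by
      rw [ht3val] at ht
      rw [div_le_iff₀ hqc] at ht
      linarith
    have : W t + q * c * t ≤ W 0 := by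
      have := hGle
      rw [hG0] at this
      simpa [hGdef] using this
    have hW0 : W 0 = V2 0 ^ q := rfl
    linarith
  -- conclude x t i = κ
  have hsum0 : ∑ j, (x t j - κ)^2 = 0 := by
    have := hV2t
    rw [hV2] at this
    simp only at this
    linarith [this]
  have hterm := (Finset.sum_eq_zero_iff_of_nonneg (fun j _ => sq_nonneg (x t j - κ))).mp
    hsum0 i (Finset.mem_univ i)
  have : x t i - κ = 0 := by
    have := sq_eq_zero_iff.mp hterm
    exact this
  linarith
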